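/- For every ε > 0 there exists r_0 such that for every integer r ≥ r_0 there exists an r-partite r-uniform intersecting hypergraph H with cover number τ(H) ≥ (1−ε)·r. -/

import Mathlib

open Finset

noncomputable section
open scoped Classical

/-- A set of vertices `C` covers the hypergraph `H` if it meets every edge. -/
def IsCover {V : Type*} (C : Set V) (H : Set (Finset V)) : Prop :=
  ∀ e ∈ H, ∃ v ∈ C, v ∈ e

/-- The cover number `τ(H)`: the minimum cardinality of a cover of `H`. -/
noncomputable def coverNumber {V : Type*} (H : Set (Finset V)) : ℕ :=
  sInf {n | ∃ C : Finset V, IsCover (↑C) H ∧ C.card = n}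

/-- The matching number `ν(H)`: the maximum size of a set of pairwise disjoint edges. -/
noncomputable def matchingNumber {V : Type*} (H : Set (Finset V)) : ℕ :=
  sSup {n | ∃ M : Finset (Finset V), ↑M ⊆ H ∧
    (M : Set (Finset V)).Pairwise (fun e₁ e₂ => Disjoint e₁ e₂) ∧ M.card = n}

/-- A hypergraph is intersecting if any two edges share a vertex. -/
def Intersecting {V : Type*} (H : Set (Finset V)) : Prop :=
  ∀ e₁ ∈ H, ∀ e₂ ∈ H, ∃ v, v ∈ e₁ ∧ v ∈ e₂

/-- A hypergraph is `r`-uniform if every edge has exactly `r` vertices. -/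
def Uniform {V : Type*} (H : Set (Finset V)) (r : ℕ) : Prop :=
  ∀ e ∈ H, e.card = r

/-- `H` is `r`-partite with the given sides: the sides partition the vertex set and
every edge has at most one vertex in each side. -/
def Partite {V : Type*} {r : ℕ} (H : Set (Finset V)) (sides : Fin r → Set V) : Prop :=
  (∀ v : V, ∃! i, v ∈ sides i) ∧
  ∀ e ∈ H, ∀ i : Fin r, ∀ x ∈ e, ∀ y ∈ e, x ∈ sides i → y ∈ sides i → x = y

/-- Two hypergraphs are isomorphic if a bijection of the vertex sets carries the
edge set of one onto the edge set of the other. -/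
def Isomorphic {V W : Type*} (H₁ : Set (Finset V)) (H₂ : Set (Finset W)) : Prop :=
  ∃ φ : V ≃ W, ∀ e : Finset V, e ∈ H₁ ↔ e.image φ ∈ H₂

/-- The edge `Ê = E ∪ {v_i}`, where the new vertex `v_i` is encoded as `Sum.inr i`. -/
def hatE {V : Type*} {r : ℕ} (E : Finset V) (i : Fin r) : Finset (V ⊕ Fin r) :=
  insert (Sum.inr i) (E.image Sum.inl)

/-- The construction `H(T, S, F_1, …, F_r)`, with new vertices `v_i = Sum.inr i`. -/
def constructionH {V : Type*} {r : ℕ} (T : Set (Finset V)) (S : Finset V)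
    (s : Fin r → V) (F : Fin r → Finset V) : Set (Finset (V ⊕ Fin r)) :=
  {Eh | ∃ E ∈ T, E ≠ S ∧ ∃ i : Fin r, s i ∈ E ∧ Eh = hatE E i} ∪
  {Eh | ∃ i : Fin r, Eh = (F i).image Sum.inl} ∪
  {Eh | ∃ i : Fin r, Eh = hatE ((F i).erase (s i)) i}

/-- The hypergraph `S(T, S, F_1, …, F_r) = E2 ∪ E3`. -/
def constructionS {V : Type*} {r : ℕ}
    (s : Fin r → V) (F : Fin r → Finset V) : Set (Finset (V ⊕ Fin r)) :=
  {Eh | ∃ i : Fin r, Eh = (F i).image Sum.inl} ∪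
  {Eh | ∃ i : Fin r, Eh = hatE ((F i).erase (s i)) i}

/-- The sides of the construction: the old sides (lifted), plus the new side `{v_1, …, v_r}`. -/
def extSides {V : Type*} {r : ℕ} (sides : Fin r → Set V) : Fin (r + 1) → Set (V ⊕ Fin r) :=
  Fin.lastCases (Set.range Sum.inr) (fun i => Sum.inl '' sides i)

open Configuration

/-- The points of the line `ℓ` other than `w`, as a finset of the vertex type `{p // p ≠ w}`. -/
noncomputable def linePoints {P L : Type*} [Membership P L] [Fintype P] (w : P) (ℓ : L) :
    Finset {p : P // p ≠ w} :=
  Finset.univ.filter (fun p : {p : P // p ≠ w} => (p : P) ∈ ℓ)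

/-- The truncated projective plane at the point `w`: the edges are the point sets of
the lines not passing through `w`, on the vertex set of points other than `w`. -/
noncomputable def truncatedPP (P : Type*) (L : Type*) [Membership P L] [Fintype P] (w : P) :
    Set (Finset {p : P // p ≠ w}) :=
  {E | ∃ ℓ : L, w ∉ ℓ ∧ E = linePoints w ℓ}

/-- The sides of the truncated projective plane, given an enumeration `m` of
the lines through `w`. -/
def ppSide {P L : Type*} [Membership P L] {r : ℕ} (w : P) (m : Fin r → L) (i : Fin r) :
    Set {p : P // p ≠ w} :=
  {p : {p : P // p ≠ w} | (p : P) ∈ m i}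

/-- `m` enumerates the lines through `w`. -/
def EnumeratesLinesThrough {P L : Type*} [Membership P L] {r : ℕ} (w : P) (m : Fin r → L) : Prop :=
  Function.Injective m ∧ (∀ i, w ∈ m i) ∧ ∀ ℓ : L, w ∈ ℓ → ∃ i, m i = ℓ

set_option maxHeartbeats 1000000

/-- degree of a vertex in a finite hypergraph -/
noncomputable def hdeg {V : Type} (E : Finset (Finset V)) (v : V) : ℕ :=
  (@Finset.filter _ (fun e => v ∈ e) (Classical.decPred _) E).card

/-- Auxiliary: existence of a finite `r`-partite `r`-uniform intersecting hypergraph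
with `E.card ≥ t * Δ` where `Δ` bounds all degrees. -/
def GoodFam (r t : ℕ) : Prop :=
  ∃ (V : Type) (_ : Fintype V) (E : Finset (Finset V)) (sides : Fin r → Set V) (Δ : ℕ),
    0 < Δ ∧ Partite (↑E : Set (Finset V)) sides ∧ Uniform (↑E : Set (Finset V)) r ∧
    Intersecting (↑E : Set (Finset V)) ∧
    (∀ v : V, hdeg E v ≤ Δ) ∧ t * Δ ≤ E.card

lemma goodFam_coverNumber {r t : ℕ} (hr : 0 < r) (h : GoodFam r t) :
    ∃ (W : Type) (H : Set (Finset W)) (sides : Fin r → Set W),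
      Partite H sides ∧ Uniform H r ∧ Intersecting H ∧ t ≤ coverNumber H := by
  classical
  obtain ⟨V, hFin, E, sides, Δ, hΔ, hpart, hunif, hint, hdegb, hcard⟩ := h
  refine ⟨V, ↑E, sides, hpart, hunif, hint, ?_⟩
  have hne : {n | ∃ C : Finset V, IsCover (↑C) (↑E : Set (Finset V)) ∧ C.card = n}.Nonempty := by
    refine ⟨(Finset.univ : Finset V).card, Finset.univ, ?_, rfl⟩
    intro e he
    have h1 : e.card = r := hunif e he
    have : e.Nonempty := Finset.card_pos.mp (by omega)
    obtain ⟨v, hv⟩ := this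
    exact ⟨v, by simp, hv⟩
  rw [coverNumber]
  refine le_csInf hne ?_
  rintro n ⟨C, hC, rfl⟩
  have hsub : E ⊆ C.biUnion (fun c => E.filter (fun e => c ∈ e)) := by
    intro e he
    obtain ⟨c, hcC, hce⟩ := hC e (by exact_mod_cast he)
    exact Finset.mem_biUnion.mpr ⟨c, hcC, Finset.mem_filter.mpr ⟨he, hce⟩⟩
  have h1 : E.card ≤ C.card * Δ := by
    calc E.card ≤ (C.biUnion (fun c => E.filter (fun e => c ∈ e))).card :=
          Finset.card_le_card hsub
      _ ≤ ∑ c ∈ C, (E.filter (fun e => c ∈ e)).card := Finset.card_biUnion_le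
      _ ≤ ∑ _c ∈ C, Δ := Finset.sum_le_sum (fun c _ => by
            have hc := hdegb c
            unfold hdeg at hc
            rwa [Finset.filter_congr_decidable] at hc)
      _ = C.card * Δ := by rw [Finset.sum_const, smul_eq_mul]
  have : t * Δ ≤ C.card * Δ := le_trans hcard h1
  exact Nat.le_of_mul_le_mul_right this hΔ

lemma goodFam_one : GoodFam 1 1 := by
  classical
  refine ⟨PUnit, inferInstance, {{PUnit.unit}}, fun _ => Set.univ, 1, Nat.one_pos, ?_, ?_, ?_, ?_, ?_⟩
  · constructor
    · intro v
      exact ⟨0, trivial, fun y _ => Subsingleton.elim _ _⟩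
    · intro _ _ _ x _ y _ _ _
      exact Subsingleton.elim x y
  · intro e he
    simp only [Finset.coe_singleton, Set.mem_singleton_iff] at he
    subst he; simp
  · intro e₁ he₁ e₂ he₂
    simp only [Finset.coe_singleton, Set.mem_singleton_iff] at he₁ he₂
    subst he₁; subst he₂
    exact ⟨PUnit.unit, by simp, by simp⟩
  · intro v
    unfold hdeg
    rw [Finset.filter_congr_decidable]
    exact le_trans (Finset.card_filter_le _ _) (by simp)
  · simp

lemma goodFam_prime (q : ℕ) (hq : q.Prime) : GoodFam (q + 1) q := by
  classical
  haveI : Fact q.Prime := ⟨hq⟩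
  haveI : NeZero q := ⟨hq.pos.ne'⟩
  have hcard : Fintype.card (ZMod q) = q := ZMod.card q
  set K := ZMod q with hK
  let edge : K × K → Finset ((K × K) ⊕ K) := fun mb =>
    (Finset.univ.image fun x : K => Sum.inl (x, mb.1 * x + mb.2)) ∪ {Sum.inr mb.1}
  have mem_inl : ∀ (m b x y : K), Sum.inl (x, y) ∈ edge (m, b) ↔ y = m * x + b := by
    intro m b x y
    simp only [edge, Finset.mem_union, Finset.mem_image, Finset.mem_singleton,
      Finset.mem_univ, true_and]
    constructor
    · rintro (⟨x', hx'⟩ | h)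
      · obtain ⟨h1, h2⟩ := Prod.mk.injEq .. ▸ (Sum.inl.injEq .. ▸ hx')
        subst h1; exact h2.symm
      · exact absurd h (by simp)
    · intro h; exact Or.inl ⟨x, by rw [h]⟩
  have mem_inr : ∀ (m b s : K), Sum.inr s ∈ edge (m, b) ↔ s = m := by
    intro m b s
    simp only [edge, Finset.mem_union, Finset.mem_image, Finset.mem_singleton,
      Finset.mem_univ, true_and]
    constructor
    · rintro (⟨x', hx'⟩ | h)
      · exact absurd hx' (by simp)
      · exact Sum.inr.injEq .. ▸ h
    · intro h; exact Or.inr (by rw [h])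
  let E : Finset (Finset ((K × K) ⊕ K)) := Finset.univ.image edge
  have edge_inj : Function.Injective edge := by
    rintro ⟨m, b⟩ ⟨m', b'⟩ h
    have h1 : m = m' := by
      have := (mem_inr m b m).mpr rfl
      rw [h] at this
      exact (mem_inr m' b' m).mp this
    have h2 : b = b' := by
      have := (mem_inl m b 0 b).mpr (by ring)
      rw [h] at this
      have := (mem_inl m' b' 0 b).mp this
      rw [this]; ring
    rw [h1, h2]
  have memE : ∀ e, e ∈ E ↔ ∃ m b : K, edge (m, b) = e := by
    intro e
    simp only [E, Finset.mem_image, Finset.mem_univ, true_and]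
    exact ⟨fun ⟨mb, h⟩ => ⟨mb.1, mb.2, h⟩, fun ⟨m, b, h⟩ => ⟨(m, b), h⟩⟩
  refine ⟨(K × K) ⊕ K, inferInstance, E, fun i =>
    if h : (i : ℕ) < q then {w | ∃ y : K, w = Sum.inl (((i : ℕ) : K), y)}
    else Set.range Sum.inr, q, hq.pos, ⟨?_, ?_⟩, ?_, ?_, ?_, ?_⟩
  · -- partition
    rintro (⟨x, y⟩ | s)
    · have hxval : (x.val : K) = x := ZMod.natCast_rightInverse x
      refine ⟨⟨x.val, lt_trans (ZMod.val_lt x) (Nat.lt_succ_self q)⟩, ?_, ?_⟩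
      · simp only [dif_pos (show x.val < q from ZMod.val_lt x)]
        exact ⟨y, by rw [hxval]⟩
      · intro i' hi'
        simp only [] at hi'
        by_cases h' : (i' : ℕ) < q
        · rw [dif_pos h'] at hi'
          obtain ⟨y', hy'⟩ := hi'
          obtain ⟨hx', -⟩ := Prod.mk.injEq .. ▸ (Sum.inl.injEq .. ▸ hy')
          apply Fin.ext
          have hv : ((i' : ℕ) : K).val = (i' : ℕ) := ZMod.val_cast_of_lt h'
          show (i' : ℕ) = x.val
          rw [← hv, hx']
        · rw [dif_neg h'] at hi'
          obtain ⟨s, hs⟩ := hi'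
          exact absurd hs (by simp)
    · refine ⟨Fin.last q, ?_, ?_⟩
      · simp only [dif_neg (show ¬ ((Fin.last q : ℕ) < q) by simp [Fin.last])]
        exact ⟨s, rfl⟩
      · intro i' hi'
        simp only [] at hi'
        by_cases h' : (i' : ℕ) < q
        · rw [dif_pos h'] at hi'
          obtain ⟨y', hy'⟩ := hi'
          exact absurd hy' (by simp)
        · rw [dif_neg h'] at hi'
          apply Fin.ext
          have := i'.isLt
          simp only [Fin.val_last]
          omega
  · -- at most one vertex of each edge per side
    intro e he i x hx y hy hxi hyi
    obtain ⟨m, b, rfl⟩ := (memE e).mp (by exact_mod_cast he)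
    simp only [] at hxi hyi
    by_cases h : (i : ℕ) < q
    · rw [dif_pos h] at hxi hyi
      obtain ⟨y₁, rfl⟩ := hxi
      obtain ⟨y₂, rfl⟩ := hyi
      have h1 := (mem_inl m b _ _).mp hx
      have h2 := (mem_inl m b _ _).mp hy
      rw [h1, h2]
    · rw [dif_neg h] at hxi hyi
      obtain ⟨s₁, rfl⟩ := hxi
      obtain ⟨s₂, rfl⟩ := hyi
      rw [(mem_inr m b _).mp hx, (mem_inr m b _).mp hy]
  · -- uniform
    intro e he
    obtain ⟨m, b, rfl⟩ := (memE e).mp (by exact_mod_cast he)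
    have hdisj : Disjoint (Finset.univ.image fun x : K => Sum.inl (x, m * x + b))
        ({Sum.inr m} : Finset ((K × K) ⊕ K)) := by
      simp only [Finset.disjoint_singleton_right, Finset.mem_image]
      rintro ⟨x, -, hx⟩
      exact absurd hx (by simp)
    have : edge (m, b) = (Finset.univ.image fun x : K => Sum.inl (x, m * x + b)) ∪ {Sum.inr m} := rfl
    rw [this, Finset.card_union_of_disjoint hdisj, Finset.card_singleton,
      Finset.card_image_of_injective _ (by
        intro a a' ha
        obtain ⟨h1, _⟩ := Prod.mk.injEq .. ▸ (Sum.inl.injEq .. ▸ ha)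
        exact h1), Finset.card_univ, hcard]
  · -- intersecting
    intro e₁ he₁ e₂ he₂
    obtain ⟨m, b, rfl⟩ := (memE e₁).mp (by exact_mod_cast he₁)
    obtain ⟨m', b', rfl⟩ := (memE e₂).mp (by exact_mod_cast he₂)
    by_cases h : m = m'
    · exact ⟨Sum.inr m, (mem_inr m b m).mpr rfl, (mem_inr m' b' m).mpr h⟩
    · have hmm' : m - m' ≠ 0 := sub_ne_zero.mpr h
      set x₀ : K := (b' - b) / (m - m') with hx₀
      have key : (b' - b) / (m - m') * (m - m') = b' - b := div_mul_cancel₀ _ hmm'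
      refine ⟨Sum.inl (x₀, m * x₀ + b), (mem_inl m b x₀ _).mpr rfl, (mem_inl m' b' x₀ _).mpr ?_⟩
      rw [hx₀]
      linear_combination key
  · -- degrees
    rintro (⟨a, c⟩ | s)
    · unfold hdeg
      rw [Finset.filter_congr_decidable]
      calc (E.filter fun e => Sum.inl (a, c) ∈ e).card
          ≤ (Finset.univ.filter fun mb : K × K => Sum.inl (a, c) ∈ edge mb).card := by
            rw [show (E.filter fun e => Sum.inl (a, c) ∈ e)
              = ((Finset.univ.filter fun mb : K × K => Sum.inl (a, c) ∈ edge mb).image edge) from ?_]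
            · exact Finset.card_image_le
            · rw [Finset.filter_image]
        _ ≤ (Finset.univ : Finset K).card := by
            apply Finset.card_le_card_of_injOn Prod.fst (fun _ _ => Finset.mem_univ _)
            intro mb hmb mb' hmb' hfst
            simp only [Finset.coe_filter, Set.mem_setOf_eq] at hmb hmb'
            have h1 := (mem_inl mb.1 mb.2 a c).mp (by exact_mod_cast hmb.2)
            have h2 := (mem_inl mb'.1 mb'.2 a c).mp (by exact_mod_cast hmb'.2)
            apply Prod.ext hfst
            have : mb.1 * a + mb.2 = mb'.1 * a + mb'.2 := by rw [← h1, ← h2]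
            rw [hfst] at this
            exact add_left_cancel this
        _ = q := by rw [Finset.card_univ, hcard]
    · unfold hdeg
      rw [Finset.filter_congr_decidable]
      calc (E.filter fun e => Sum.inr s ∈ e).card
          ≤ (Finset.univ.filter fun mb : K × K => Sum.inr s ∈ edge mb).card := by
            rw [show (E.filter fun e => Sum.inr s ∈ e)
              = ((Finset.univ.filter fun mb : K × K => Sum.inr s ∈ edge mb).image edge) from ?_]
            · exact Finset.card_image_le
            · rw [Finset.filter_image]
        _ ≤ (Finset.univ : Finset K).card := by
            apply Finset.card_le_card_of_injOn Prod.snd (fun _ _ => Finset.mem_univ _)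
            intro mb hmb mb' hmb' hsnd
            simp only [Finset.coe_filter, Set.mem_setOf_eq] at hmb hmb'
            have h1 := (mem_inr mb.1 mb.2 s).mp (by exact_mod_cast hmb.2)
            have h2 := (mem_inr mb'.1 mb'.2 s).mp (by exact_mod_cast hmb'.2)
            exact Prod.ext (by rw [← h1, ← h2]) hsnd
        _ = q := by rw [Finset.card_univ, hcard]
  · -- edge count
    have : E.card = q * q := by
      rw [Finset.card_image_of_injective _ edge_inj, Finset.card_univ, Fintype.card_prod,
        hcard]
    rw [this]

lemma goodFam_mul {r₁ t₁ r₂ t₂ : ℕ} (hr₁ : 0 < r₁) (hr₂ : 0 < r₂)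
    (h₁ : GoodFam r₁ t₁) (h₂ : GoodFam r₂ t₂) : GoodFam (r₁ * r₂) (t₁ * t₂) := by
  classical
  obtain ⟨V₁, hF₁, E₁, s₁, Δ₁, hΔ₁, ⟨hp₁, hq₁⟩, hu₁, hi₁, hd₁, hc₁⟩ := h₁
  obtain ⟨V₂, hF₂, E₂, s₂, Δ₂, hΔ₂, ⟨hp₂, hq₂⟩, hu₂, hi₂, hd₂, hc₂⟩ := h₂
  let f : Finset V₁ × Finset V₂ → Finset (V₁ × V₂) := fun p => p.1 ×ˢ p.2
  let E := (E₁ ×ˢ E₂).image f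
  have memf : ∀ (e₁ : Finset V₁) (e₂ : Finset V₂) (w : V₁ × V₂),
      w ∈ f (e₁, e₂) ↔ w.1 ∈ e₁ ∧ w.2 ∈ e₂ := fun _ _ _ => Finset.mem_product
  have hinj : ∀ p ∈ E₁ ×ˢ E₂, ∀ p' ∈ E₁ ×ˢ E₂, f p = f p' → p = p' := by
    rintro ⟨e₁, e₂⟩ hp ⟨f₁, f₂⟩ hp' hf
    rw [Finset.mem_product] at hp hp'
    have hne₁ : e₁.Nonempty := Finset.card_pos.mp (by rw [hu₁ e₁ (by exact_mod_cast hp.1)]; omega)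
    have hne₂ : e₂.Nonempty := Finset.card_pos.mp (by rw [hu₂ e₂ (by exact_mod_cast hp.2)]; omega)
    obtain ⟨x₁, hx₁⟩ := hne₁
    obtain ⟨x₂, hx₂⟩ := hne₂
    have hx : (x₁, x₂) ∈ f (f₁, f₂) := by rw [← hf]; exact (memf _ _ _).mpr ⟨hx₁, hx₂⟩
    rw [memf] at hx
    have he₁ : e₁ = f₁ := by
      ext a
      constructor
      · intro ha
        have : (a, x₂) ∈ f (f₁, f₂) := by rw [← hf]; exact (memf _ _ _).mpr ⟨ha, hx₂⟩
        exact ((memf _ _ _).mp this).1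
      · intro ha
        have : (a, x₂) ∈ f (e₁, e₂) := by rw [hf]; exact (memf _ _ _).mpr ⟨ha, hx.2⟩
        exact ((memf _ _ _).mp this).1
    have he₂ : e₂ = f₂ := by
      ext a
      constructor
      · intro ha
        have : (x₁, a) ∈ f (f₁, f₂) := by rw [← hf]; exact (memf _ _ _).mpr ⟨hx₁, ha⟩
        exact ((memf _ _ _).mp this).2
      · intro ha
        have : (x₁, a) ∈ f (e₁, e₂) := by rw [hf]; exact (memf _ _ _).mpr ⟨hx.1, ha⟩
        exact ((memf _ _ _).mp this).2
    rw [Prod.mk.injEq]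
    exact ⟨he₁, he₂⟩
  have memE : ∀ e, e ∈ E ↔ ∃ e₁ ∈ E₁, ∃ e₂ ∈ E₂, e = e₁ ×ˢ e₂ := by
    intro e
    simp only [E, Finset.mem_image, Finset.mem_product]
    constructor
    · rintro ⟨⟨e₁, e₂⟩, ⟨h1, h2⟩, rfl⟩; exact ⟨e₁, h1, e₂, h2, rfl⟩
    · rintro ⟨e₁, h1, e₂, h2, rfl⟩; exact ⟨(e₁, e₂), ⟨h1, h2⟩, rfl⟩
  refine ⟨V₁ × V₂, inferInstance, E,
    fun k => {w | w.1 ∈ s₁ (finProdFinEquiv.symm k).1 ∧ w.2 ∈ s₂ (finProdFinEquiv.symm k).2},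
    Δ₁ * Δ₂, Nat.mul_pos hΔ₁ hΔ₂, ⟨?_, ?_⟩, ?_, ?_, ?_, ?_⟩
  · -- partition
    rintro ⟨v₁, v₂⟩
    obtain ⟨i, hi, hiu⟩ := hp₁ v₁
    obtain ⟨j, hj, hju⟩ := hp₂ v₂
    refine ⟨finProdFinEquiv (i, j), ?_, ?_⟩
    · constructor <;> simp only [Equiv.symm_apply_apply] <;> assumption
    · intro k hk
      obtain ⟨hk1, hk2⟩ := hk
      have h1 : (finProdFinEquiv.symm k).1 = i := hiu _ hk1
      have h2 : (finProdFinEquiv.symm k).2 = j := hju _ hk2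
      have : finProdFinEquiv.symm k = (i, j) := Prod.ext h1 h2
      rw [← this, Equiv.apply_symm_apply]
  · -- partite edges
    intro e he k x hx y hy hxk hyk
    obtain ⟨e₁, h1, e₂, h2, rfl⟩ := (memE e).mp (by exact_mod_cast he)
    rw [Finset.mem_product] at hx hy
    have hx1 := hq₁ e₁ (by exact_mod_cast h1) (finProdFinEquiv.symm k).1 x.1 hx.1 y.1 hy.1
      hxk.1 hyk.1
    have hx2 := hq₂ e₂ (by exact_mod_cast h2) (finProdFinEquiv.symm k).2 x.2 hx.2 y.2 hy.2
      hxk.2 hyk.2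
    exact Prod.ext hx1 hx2
  · -- uniform
    intro e he
    obtain ⟨e₁, h1, e₂, h2, rfl⟩ := (memE e).mp (by exact_mod_cast he)
    rw [Finset.card_product, hu₁ e₁ (by exact_mod_cast h1), hu₂ e₂ (by exact_mod_cast h2)]
  · -- intersecting
    intro e he e' he'
    obtain ⟨e₁, h1, e₂, h2, rfl⟩ := (memE e).mp (by exact_mod_cast he)
    obtain ⟨f₁, g1, f₂, g2, rfl⟩ := (memE e').mp (by exact_mod_cast he')
    obtain ⟨v₁, hv₁, hv₁'⟩ := hi₁ e₁ (by exact_mod_cast h1) f₁ (by exact_mod_cast g1)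
    obtain ⟨v₂, hv₂, hv₂'⟩ := hi₂ e₂ (by exact_mod_cast h2) f₂ (by exact_mod_cast g2)
    exact ⟨(v₁, v₂), Finset.mem_product.mpr ⟨hv₁, hv₂⟩, Finset.mem_product.mpr ⟨hv₁', hv₂'⟩⟩
  · -- degrees
    rintro ⟨v₁, v₂⟩
    unfold hdeg
    rw [Finset.filter_congr_decidable]
    calc (E.filter fun e => (v₁, v₂) ∈ e).card
        ≤ ((E₁ ×ˢ E₂).filter fun p => (v₁, v₂) ∈ f p).card := by
          rw [show (E.filter fun e => (v₁, v₂) ∈ e)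
            = ((E₁ ×ˢ E₂).filter fun p => (v₁, v₂) ∈ f p).image f from by
              rw [Finset.filter_image]]
          exact Finset.card_image_le
      _ = ((E₁.filter fun e => v₁ ∈ e) ×ˢ (E₂.filter fun e => v₂ ∈ e)).card := by
          congr 1
          ext ⟨e₁, e₂⟩
          simp only [Finset.mem_filter, Finset.mem_product, memf]
          tauto
      _ ≤ Δ₁ * Δ₂ := by
          rw [Finset.card_product]
          have d1 := hd₁ v₁; have d2 := hd₂ v₂
          unfold hdeg at d1 d2
          rw [Finset.filter_congr_decidable] at d1 d2
          exact Nat.mul_le_mul d1 d2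
  · -- edge count
    have : E.card = E₁.card * E₂.card := by
      rw [Finset.card_image_of_injOn hinj, Finset.card_product]
    rw [this]
    calc t₁ * t₂ * (Δ₁ * Δ₂) = (t₁ * Δ₁) * (t₂ * Δ₂) := by ring
      _ ≤ E₁.card * E₂.card := Nat.mul_le_mul hc₁ hc₂

lemma goodFam_pow {r t : ℕ} (hr : 0 < r) (h : GoodFam r t) :
    ∀ n : ℕ, GoodFam (r ^ n) (t ^ n) := by
  intro n
  induction n with
  | zero => simpa using goodFam_one
  | succ n ih =>
      rw [pow_succ, pow_succ]
      exact goodFam_mul (pow_pos hr n) hr ih h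

lemma goodFam_pad {r t r' : ℕ} (hr : 0 < r) (hrr' : r ≤ r') (h : GoodFam r t) :
    GoodFam r' t := by
  classical
  obtain ⟨V, hF, E, s, Δ, hΔ, ⟨hp, hq⟩, hu, hi, hd, hc⟩ := h
  set k := r' - r with hk
  let pad : {x // x ∈ E} → Finset (V ⊕ ({x // x ∈ E} × Fin k)) := fun e =>
    e.1.image Sum.inl ∪ (Finset.univ : Finset (Fin k)).image (fun j => Sum.inr (e, j))
  have mem_inl : ∀ (e : {x // x ∈ E}) (v : V), Sum.inl v ∈ pad e ↔ v ∈ e.1 := by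
    intro e v
    simp only [pad, Finset.mem_union, Finset.mem_image, Finset.mem_univ, true_and]
    constructor
    · rintro (⟨x, hx, hxe⟩ | ⟨j, hj⟩)
      · injection hxe with h; rw [← h]; exact hx
      · exact absurd hj (by simp)
    · intro hv; exact Or.inl ⟨v, hv, rfl⟩
  have mem_inr : ∀ (e e' : {x // x ∈ E}) (j : Fin k), Sum.inr (e', j) ∈ pad e ↔ e' = e := by
    intro e e' j
    simp only [pad, Finset.mem_union, Finset.mem_image, Finset.mem_univ, true_and]
    constructor
    · rintro (⟨x, hx, hxe⟩ | ⟨j', hj'⟩)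
      · exact absurd hxe (by simp)
      · obtain ⟨h1, -⟩ := Prod.mk.injEq .. ▸ (Sum.inr.injEq .. ▸ hj')
        exact h1.symm
    · rintro rfl; exact Or.inr ⟨j, rfl⟩
  let E' := E.attach.image pad
  have memE' : ∀ e', e' ∈ E' ↔ ∃ e : {x // x ∈ E}, pad e = e' := by
    intro e'
    simp only [E', Finset.mem_image, Finset.mem_attach, true_and]
  have pad_injOn : ∀ a ∈ E.attach, ∀ b ∈ E.attach, pad a = pad b → a = b := by
    intro a _ b _ hab
    have hsub : ∀ x ∈ a.1, x ∈ b.1 := by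
      intro x hx
      have : Sum.inl x ∈ pad b := hab ▸ (mem_inl a x).mpr hx
      exact (mem_inl b x).mp this
    have hsub' : ∀ x ∈ b.1, x ∈ a.1 := by
      intro x hx
      have : Sum.inl x ∈ pad a := hab ▸ (mem_inl b x).mpr hx
      exact (mem_inl a x).mp this
    exact Subtype.ext (Finset.Subset.antisymm hsub hsub')
  refine ⟨V ⊕ ({x // x ∈ E} × Fin k), inferInstance, E',
    fun i => if h : (i : ℕ) < r then Sum.inl '' (s ⟨(i : ℕ), h⟩)
      else {w | ∃ e j, w = Sum.inr (e, j) ∧ (j : ℕ) + r = (i : ℕ)},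
    Δ, hΔ, ⟨?_, ?_⟩, ?_, ?_, ?_, ?_⟩
  · -- partition
    rintro (v | ⟨e, j⟩)
    · obtain ⟨i, hi, hiu⟩ := hp v
      refine ⟨Fin.castLE (by omega) i, ?_, ?_⟩
      · simp only [dif_pos (show ((Fin.castLE (by omega : r ≤ r') i : Fin r') : ℕ) < r from i.isLt)]
        exact ⟨v, by simpa using hi, rfl⟩
      · intro i' hi'
        simp only [] at hi'
        by_cases h' : (i' : ℕ) < r
        · rw [dif_pos h'] at hi'
          obtain ⟨v', hv', hvv'⟩ := hi'
          have hveq : v' = v := by injection hvv'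
          subst hveq
          have heq := hiu ⟨(i' : ℕ), h'⟩ hv'
          apply Fin.ext
          have h2 : ((i' : ℕ) : ℕ) = (i : ℕ) := congrArg Fin.val heq
          simpa using h2
        · rw [dif_neg h'] at hi'
          obtain ⟨e, j, hj, -⟩ := hi'
          exact absurd hj (by simp)
    · refine ⟨⟨(j : ℕ) + r, by have := j.isLt; omega⟩, ?_, ?_⟩
      · simp only [dif_neg (show ¬((j : ℕ) + r < r) by omega)]
        exact ⟨e, j, rfl, rfl⟩
      · intro i' hi'
        simp only [] at hi'
        by_cases h' : (i' : ℕ) < r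
        · rw [dif_pos h'] at hi'
          obtain ⟨v', -, hv'⟩ := hi'
          exact absurd hv' (by simp)
        · rw [dif_neg h'] at hi'
          obtain ⟨e', j', hj', hji⟩ := hi'
          obtain ⟨h1, h2⟩ := Prod.mk.injEq .. ▸ (Sum.inr.injEq .. ▸ hj')
          apply Fin.ext
          rw [← hji, ← h2]
  · -- partite edges
    intro e' he' i x hx y hy hxi hyi
    obtain ⟨e, rfl⟩ := (memE' e').mp (by exact_mod_cast he')
    simp only [] at hxi hyi
    by_cases h : (i : ℕ) < r
    · rw [dif_pos h] at hxi hyi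
      obtain ⟨x₀, hx₀, rfl⟩ := hxi
      obtain ⟨y₀, hy₀, rfl⟩ := hyi
      have hx' := (mem_inl e x₀).mp hx
      have hy' := (mem_inl e y₀).mp hy
      rw [hq e.1 (by exact_mod_cast e.2) ⟨(i : ℕ), h⟩ x₀ hx' y₀ hy' hx₀ hy₀]
    · rw [dif_neg h] at hxi hyi
      obtain ⟨e₁, j₁, rfl, hj₁⟩ := hxi
      obtain ⟨e₂, j₂, rfl, hj₂⟩ := hyi
      have h1 : e₁ = e := (mem_inr e e₁ j₁).mp hx
      have h2 : e₂ = e := (mem_inr e e₂ j₂).mp hy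
      have : j₁ = j₂ := Fin.ext (by omega)
      rw [h1, h2, this]
  · -- uniform
    intro e' he'
    obtain ⟨e, rfl⟩ := (memE' e').mp (by exact_mod_cast he')
    have hdisj : Disjoint (e.1.image (Sum.inl : V → V ⊕ ({x // x ∈ E} × Fin k)))
        ((Finset.univ : Finset (Fin k)).image (fun j => Sum.inr (e, j))) := by
      rw [Finset.disjoint_left]
      rintro a ha hb
      obtain ⟨x, -, rfl⟩ := Finset.mem_image.mp ha
      obtain ⟨j, -, hj⟩ := Finset.mem_image.mp hb
      exact absurd hj (by simp)
    have : pad e = e.1.image Sum.inl ∪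
        (Finset.univ : Finset (Fin k)).image (fun j => Sum.inr (e, j)) := rfl
    rw [this, Finset.card_union_of_disjoint hdisj,
      Finset.card_image_of_injective _ Sum.inl_injective,
      Finset.card_image_of_injective _ (fun a b hab => by
        obtain ⟨-, h2⟩ := Prod.mk.injEq .. ▸ (Sum.inr.injEq .. ▸ hab); exact h2),
      hu e.1 (by exact_mod_cast e.2), Finset.card_univ, Fintype.card_fin]
    omega
  · -- intersecting
    intro e' he' f' hf'
    obtain ⟨e, rfl⟩ := (memE' e').mp (by exact_mod_cast he')
    obtain ⟨f, rfl⟩ := (memE' f').mp (by exact_mod_cast hf')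
    obtain ⟨v, hv, hv'⟩ := hi e.1 (by exact_mod_cast e.2) f.1 (by exact_mod_cast f.2)
    exact ⟨Sum.inl v, (mem_inl e v).mpr hv, (mem_inl f v).mpr hv'⟩
  · -- degrees
    rintro (v | ⟨e₀, j₀⟩)
    · unfold hdeg
      rw [Finset.filter_congr_decidable]
      calc (E'.filter fun e => Sum.inl v ∈ e).card
          ≤ (E.attach.filter fun e => Sum.inl v ∈ pad e).card := by
            rw [show (E'.filter fun e => Sum.inl v ∈ e)
              = (E.attach.filter fun e => Sum.inl v ∈ pad e).image pad from by
                rw [Finset.filter_image]]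
            exact Finset.card_image_le
        _ ≤ (E.filter fun e => v ∈ e).card := by
            apply Finset.card_le_card_of_injOn Subtype.val
            · intro a ha
              rw [Finset.mem_coe, Finset.mem_filter] at ha ⊢
              exact ⟨a.2, (mem_inl a v).mp ha.2⟩
            · intro a _ b _ hab
              exact Subtype.ext hab
        _ ≤ Δ := by
            have := hd v
            unfold hdeg at this
            rwa [Finset.filter_congr_decidable] at this
    · unfold hdeg
      rw [Finset.filter_congr_decidable]
      calc (E'.filter fun e => Sum.inr (e₀, j₀) ∈ e).card
          ≤ (E.attach.filter fun e => Sum.inr (e₀, j₀) ∈ pad e).card := by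
            rw [show (E'.filter fun e => Sum.inr (e₀, j₀) ∈ e)
              = (E.attach.filter fun e => Sum.inr (e₀, j₀) ∈ pad e).image pad from by
                rw [Finset.filter_image]]
            exact Finset.card_image_le
        _ ≤ ({e₀} : Finset {x // x ∈ E}).card := by
            apply Finset.card_le_card_of_injOn id
            · intro a ha
              rw [Finset.mem_coe, Finset.mem_filter] at ha
              have := (mem_inr a e₀ j₀).mp ha.2
              simp [← this]
            · intro a _ b _ hab; exact hab
        _ ≤ Δ := by rw [Finset.card_singleton]; exact hΔ
  · -- edge count
    have : E'.card = E.card := by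
      rw [Finset.card_image_of_injOn pad_injOn, Finset.card_attach]
    rw [this]
    exact hc

/-- number of primes `< N` -/
def pcount (N : ℕ) : ℕ := ((Finset.range N).filter Nat.Prime).card

lemma four_mul_le_two_pow {i : ℕ} (hi : 5 ≤ i) : 4 * i ≤ 2 ^ i := by
  induction i with
  | zero => omega
  | succ n ih =>
      rcases Nat.lt_or_ge n 5 with h | h
      · interval_cases n <;> simp_all <;> omega
      · have h4 : (4:ℕ) ≤ 2 ^ n := le_trans (by norm_num) (Nat.pow_le_pow_right (by norm_num) h)
        have := ih (by omega)
        rw [pow_succ]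
        omega

lemma cheb_low (M : ℕ) (hM : 3 ≤ M) : 2 ^ M ≤ M * (pcount (2 ^ M + 1) + 1) := by
  classical
  set n := 2 ^ (M - 1) with hn
  have h2n : 2 * n = 2 ^ M := by
    rw [hn, ← pow_succ']
    congr 1
    omega
  have hn4 : 4 ≤ n := by
    calc (4:ℕ) = 2 ^ 2 := rfl
      _ ≤ 2 ^ (M - 1) := Nat.pow_le_pow_right (by norm_num) (by omega)
  have h1 : 4 ^ n < n * Nat.centralBinom n := Nat.four_pow_lt_mul_centralBinom n hn4
  have h2 : Nat.centralBinom n ≤ (2 * n) ^ pcount (2 * n + 1) := by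
    conv_lhs => rw [← Nat.prod_pow_factorization_centralBinom n]
    have hres : ∏ p ∈ Finset.range (2 * n + 1), p ^ (Nat.centralBinom n).factorization p
        = ∏ p ∈ (Finset.range (2 * n + 1)).filter Nat.Prime,
            p ^ (Nat.centralBinom n).factorization p := by
      symm
      apply Finset.prod_filter_of_ne
      intro p _ hne
      by_contra hp
      rw [Nat.factorization_eq_zero_of_not_prime _ hp, pow_zero] at hne
      exact hne rfl
    rw [hres]
    apply Finset.prod_le_pow_card
    intro p _
    have h := Nat.pow_factorization_choose_le (p := p) (n := 2 * n) (k := n) (by omega)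
    rwa [← Nat.centralBinom_eq_two_mul_choose] at h
  have h3 : 4 ^ n < (2 * n) ^ (pcount (2 * n + 1) + 1) := by
    calc 4 ^ n < n * Nat.centralBinom n := h1
      _ ≤ n * (2 * n) ^ pcount (2 * n + 1) := Nat.mul_le_mul_left n h2
      _ ≤ (2 * n) * (2 * n) ^ pcount (2 * n + 1) := Nat.mul_le_mul_right _ (by omega)
      _ = (2 * n) ^ (pcount (2 * n + 1) + 1) := (pow_succ' _ _).symm
  rw [h2n] at h3
  have e1 : (4:ℕ) ^ n = 2 ^ (2 * n) := by
    rw [show (4:ℕ) = 2 ^ 2 from rfl, ← pow_mul, Nat.mul_comm 2 n, Nat.mul_comm n 2]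
  rw [e1, h2n] at h3
  have e2 : ((2:ℕ) ^ M) ^ (pcount (2 ^ M + 1) + 1) = 2 ^ (M * (pcount (2 ^ M + 1) + 1)) := by
    rw [← pow_mul]
  rw [e2] at h3
  exact le_of_lt ((Nat.pow_lt_pow_iff_right (by norm_num : 1 < 2)).mp h3)

lemma cheb_up (j M : ℕ) (hj : 1 ≤ j) (hjM : j ≤ M) :
    j * (pcount (2 ^ M + 1) - pcount (2 ^ j + 1)) ≤ 2 ^ (M + 1) := by
  classical
  set K := 2 ^ j with hK
  set N := 2 ^ M with hN
  set S := (Finset.range (N + 1)).filter Nat.Prime with hS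
  set S2 := S.filter (fun p => K < p) with hS2
  have hcard : pcount (N + 1) - pcount (K + 1) ≤ S2.card := by
    have hsplit : S2.card + (S.filter (fun p => ¬ K < p)).card = S.card := by
      simpa using Finset.card_filter_add_card_filter_not
        (s := S) (p := fun p => K < p)
    have hsub : S.filter (fun p => ¬ K < p) ⊆ (Finset.range (K + 1)).filter Nat.Prime := by
      intro p hp
      rw [Finset.mem_filter] at hp ⊢
      obtain ⟨hp1, hp2⟩ := hp
      rw [hS, Finset.mem_filter, Finset.mem_range] at hp1
      exact ⟨Finset.mem_range.mpr (by omega), hp1.2⟩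
    have h2 := Finset.card_le_card hsub
    have e1 : pcount (N + 1) = S.card := rfl
    have e2 : pcount (K + 1) = ((Finset.range (K + 1)).filter Nat.Prime).card := rfl
    omega
  have hprod : K ^ S2.card ≤ 4 ^ N := by
    calc K ^ S2.card ≤ ∏ p ∈ S2, p :=
          Finset.pow_card_le_prod _ _ _ (fun p hp => le_of_lt (Finset.mem_filter.mp hp).2)
      _ ≤ ∏ p ∈ S, p := Finset.prod_le_prod_of_subset_of_one_le' (Finset.filter_subset _ _)
          (fun p hp _ => (Finset.mem_filter.mp hp).2.one_lt.le)
      _ = primorial N := by rw [primorial, hS]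
      _ ≤ 4 ^ N := primorial_le_4_pow N
  have hexp : (2:ℕ) ^ (j * S2.card) ≤ 2 ^ (2 ^ (M + 1)) := by
    have e1 : (2:ℕ) ^ (j * S2.card) = K ^ S2.card := by rw [hK, pow_mul]
    have e2 : (4:ℕ) ^ N = 2 ^ (2 ^ (M + 1)) := by
      rw [show (4:ℕ) = 2 ^ 2 from rfl, ← pow_mul, hN, pow_succ, Nat.mul_comm (2 ^ M) 2]
    rw [e1, ← e2]
    exact hprod
  have h4 := (Nat.pow_le_pow_iff_right (by norm_num : 1 < 2)).mp hexp
  calc j * (pcount (N + 1) - pcount (K + 1)) ≤ j * S2.card := Nat.mul_le_mul_left j hcard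
    _ ≤ 2 ^ (M + 1) := h4

lemma primes_window (B m₀ : ℕ) :
    ∃ m : ℕ, m₀ ≤ m ∧ B + pcount (2 ^ m + 1) ≤ pcount (2 ^ (m + 3) + 1) := by
  classical
  set i := B + m₀ + 10 with hi
  refine ⟨2 * i, by omega, ?_⟩
  have hA := cheb_low (2 * i + 3) (by omega)
  have hB := cheb_up i (2 * i) (by omega) (by omega)
  have hKb : pcount (2 ^ i + 1) ≤ 2 ^ i + 1 := by
    calc pcount (2 ^ i + 1) ≤ (Finset.range (2 ^ i + 1)).card := Finset.card_filter_le _ _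
      _ = 2 ^ i + 1 := Finset.card_range _
  have hmono : pcount (2 ^ i + 1) ≤ pcount (2 ^ (2 * i) + 1) := by
    apply Finset.card_le_card
    apply Finset.filter_subset_filter
    apply Finset.range_subset_range.mpr
    have : (2:ℕ) ^ i ≤ 2 ^ (2 * i) := Nat.pow_le_pow_right (by norm_num) (by omega)
    omega
  set x := 2 ^ i with hx
  set pc8 := pcount (2 ^ (2 * i + 3) + 1) with hpc8
  set pcN := pcount (2 ^ (2 * i) + 1) with hpcN
  set pcK := pcount (2 ^ i + 1) with hpcK
  have ex : ∀ c : ℕ, 2 ^ (2 * i + c) = 2 ^ c * (x * x) := by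
    intro c
    rw [hx, show 2 * i + c = i + (i + c) by ring, pow_add, pow_add]
    ring
  rw [ex 3] at hA
  rw [ex 1] at hB
  have ex0 : 2 ^ (2 * i) = x * x := by
    have := ex 0
    simpa using this
  -- translate hB
  have t2 : i * pcN ≤ i * pcK + 2 * (x * x) := by
    have hsplit : pcN ≤ pcK + (pcN - pcK) := by omega
    calc i * pcN ≤ i * (pcK + (pcN - pcK)) := Nat.mul_le_mul_left i hsplit
      _ = i * pcK + i * (pcN - pcK) := by ring
      _ ≤ i * pcK + 2 ^ 1 * (x * x) := by
          have := hB
          omega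
      _ = i * pcK + 2 * (x * x) := by norm_num
  have h4x : 4 * i ≤ x := by
    rw [hx]
    exact four_mul_le_two_pow (by omega)
  have hBi : B ≤ i := by omega
  have hi10 : 10 ≤ i := by omega
  -- final numeric step
  have key : i * ((2 * i + 3) * (B + pcN)) < i * ((2 * i + 3) * (pc8 + 1)) := by
    have rhs : i * (2 ^ 3 * (x * x)) ≤ i * ((2 * i + 3) * (pc8 + 1)) :=
      Nat.mul_le_mul_left i hA
    have lhs : i * ((2 * i + 3) * (B + pcN)) ≤
        (2 * i + 3) * (i * B) + (2 * i + 3) * (i * pcK + 2 * (x * x)) := by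
      calc i * ((2 * i + 3) * (B + pcN)) = (2 * i + 3) * (i * B) + (2 * i + 3) * (i * pcN) := by
            ring
        _ ≤ (2 * i + 3) * (i * B) + (2 * i + 3) * (i * pcK + 2 * (x * x)) := by
            have := Nat.mul_le_mul_left (2 * i + 3) t2
            omega
    have hKb' : i * pcK ≤ i * (x + 1) := Nat.mul_le_mul_left i hKb
    have numeric : (2 * i + 3) * (i * B) + (2 * i + 3) * (i * (x + 1) + 2 * (x * x))
        < i * (2 ^ 3 * (x * x)) := by
      nlinarith [h4x, hBi, hi10, Nat.mul_le_mul h4x h4x, sq_nonneg x, sq_nonneg i,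
        Nat.mul_le_mul_left i h4x, Nat.mul_le_mul_left (x*x) hi10]
    have lhs2 : (2 * i + 3) * (i * pcK + 2 * (x * x)) ≤
        (2 * i + 3) * (i * (x + 1) + 2 * (x * x)) := by
      have := Nat.mul_le_mul_left (2 * i + 3) (Nat.add_le_add_right hKb' (2 * (x * x)))
      omega
    omega
  have := Nat.lt_of_mul_lt_mul_left key
  have := Nat.lt_of_mul_lt_mul_left this
  omega

lemma prime_pair (G m₀ : ℕ) (hG : 1 ≤ G) :
    ∃ p p' : ℕ, p.Prime ∧ p'.Prime ∧ m₀ ≤ p ∧ p < p' ∧ G ≤ p' - p ∧ (p' - p) * G ≤ p := by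
  classical
  obtain ⟨m, hm, hwin⟩ := primes_window (14 * G * G + G + 1) (m₀ + 2 * G * G + G + 5)
  set N := 2 ^ m with hN
  have hmN : m < N := Nat.lt_two_pow_self
  have hNbig : m₀ + 2 * G * G + G + 5 ≤ N := by omega
  set W := (Finset.range (2 ^ (m + 3) + 1)).filter (fun q => Nat.Prime q ∧ N < q) with hW
  have hWcard : 14 * G * G + G + 1 ≤ W.card := by
    have hsplit : pcount (2 ^ (m + 3) + 1) ≤ pcount (N + 1) + W.card := by
      have hsub : (Finset.range (2 ^ (m + 3) + 1)).filter Nat.Prime ⊆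
          ((Finset.range (N + 1)).filter Nat.Prime) ∪ W := by
        intro q hq
        rw [Finset.mem_filter, Finset.mem_range] at hq
        rcases Nat.lt_or_ge N q with h | h
        · exact Finset.mem_union_right _ (Finset.mem_filter.mpr
            ⟨Finset.mem_range.mpr hq.1, hq.2, h⟩)
        · exact Finset.mem_union_left _ (Finset.mem_filter.mpr
            ⟨Finset.mem_range.mpr (by omega), hq.2⟩)
      calc pcount (2 ^ (m + 3) + 1)
          ≤ (((Finset.range (N + 1)).filter Nat.Prime) ∪ W).card := Finset.card_le_card hsub
        _ ≤ pcount (N + 1) + W.card := Finset.card_union_le _ _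
    omega
  have hmemW : ∀ q ∈ W, Nat.Prime q ∧ N < q ∧ q ≤ 2 ^ (m + 3) := by
    intro q hq
    rw [hW, Finset.mem_filter, Finset.mem_range] at hq
    exact ⟨hq.2.1, hq.2.2, by omega⟩
  by_contra hcon
  push_neg at hcon
  set w := N / G with hw
  have hGw : G ≤ w := by
    rw [hw]
    rw [Nat.le_div_iff_mul_le (by omega)]
    nlinarith
  have hwG : w * G ≤ N := by
    rw [hw, Nat.mul_comm]
    exact Nat.mul_div_le N G  -- G * (N / G) ≤ N ; check direction
  -- no pair at distance in [G, w]
  have hkey : ∀ a ∈ W, ∀ b ∈ W, a < b → b - a < G ∨ w < b - a := by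
    intro a ha b hb hab
    by_contra hcontra
    push_neg at hcontra
    obtain ⟨h1, h2⟩ := hcontra
    obtain ⟨hap, haN, -⟩ := hmemW a ha
    obtain ⟨hbp, -, -⟩ := hmemW b hb
    have hm₀a : m₀ ≤ a := by omega
    have hdG : (b - a) * G ≤ a := by
      calc (b - a) * G ≤ w * G := Nat.mul_le_mul_right G h2
        _ ≤ N := hwG
        _ ≤ a := le_of_lt haN
    have := hcon a b hap hbp hm₀a hab h1
    omega
  -- bucket map
  set f : ℕ → ℕ := fun q => (q - (N + 1)) / w with hf
  have hwpos : 0 < w := by omega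
  have hmaps : ∀ q ∈ W, f q ∈ Finset.range (14 * G + 1) := by
    intro q hq
    obtain ⟨-, hNq, hq8⟩ := hmemW q hq
    rw [Finset.mem_range, hf]
    rw [Nat.div_lt_iff_lt_mul hwpos]
    have h8 : (2:ℕ) ^ (m + 3) = 8 * N := by
      rw [hN, pow_add]
      ring
    have hNpos : 1 ≤ N := Nat.one_le_two_pow
    have hq7 : q - (N + 1) ≤ 7 * N - 1 := by omega
    have hNln : N < G * w + G := by
      have hd := Nat.div_add_mod N G
      rw [← hw] at hd
      have hmlt := Nat.mod_lt N (show 0 < G by omega)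
      omega
    have hfin : 7 * N ≤ (14 * G + 1) * w := by
      nlinarith [hNln, hGw, hG]
    calc q - (N + 1) ≤ 7 * N - 1 := hq7
      _ < 7 * N := by omega
      _ ≤ (14 * G + 1) * w := hfin
  have hfiber : ∀ v ∈ Finset.range (14 * G + 1), (W.filter (fun q => f q = v)).card ≤ G := by
    intro v _
    set T := W.filter (fun q => f q = v) with hT
    rcases Finset.eq_empty_or_nonempty T with hTe | hTne
    · rw [hTe]; simp
    · have hclose : ∀ a ∈ T, ∀ b ∈ T, a < b → b - a < G := by
        intro a ha b hb hab
        rw [hT, Finset.mem_filter] at ha hb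
        have hfa : f a = v := ha.2
        have hfb : f b = v := hb.2
        have haN : N < a := (hmemW a ha.1).2.1
        have hbN : N < b := (hmemW b hb.1).2.1
        have hdiff : b - a < w := by
          simp only [hf] at hfa hfb
          have hda := Nat.div_add_mod (a - (N + 1)) w
          have hdb := Nat.div_add_mod (b - (N + 1)) w
          rw [hfa] at hda
          rw [hfb] at hdb
          have hma := Nat.mod_lt (a - (N + 1)) hwpos
          have hmb := Nat.mod_lt (b - (N + 1)) hwpos
          omega
        rcases hkey a ha.1 b hb.1 hab with h | h
        · exact h
        · omega
      set a₀ := T.min' hTne with ha₀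
      have ha₀T : a₀ ∈ T := T.min'_mem hTne
      rw [show G = (Finset.range G).card from (Finset.card_range G).symm]
      apply Finset.card_le_card_of_injOn (fun q => q - a₀)
      · intro q hq
        simp only [Finset.coe_range, Set.mem_Iio]
        rcases Nat.lt_or_ge a₀ q with h | h
        · exact hclose a₀ ha₀T q hq h
        · have hmin := T.min'_le q hq
          omega
      · intro q1 hq1 q2 hq2 hsub
        have h1 := T.min'_le q1 hq1
        have h2 := T.min'_le q2 hq2
        simp only [] at hsub
        omega
  have hWle : W.card ≤ G * (14 * G + 1) := by
    have := Finset.card_le_mul_card_image_of_maps_to hmaps G hfiber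
    calc W.card ≤ G * (Finset.range (14 * G + 1)).card := this
      _ = G * (14 * G + 1) := by rw [Finset.card_range]
  nlinarith [hWcard, hWle]

theorem statement_17_aux (ε : ℝ) (hε : 0 < ε) :
    ∃ r₀ : ℕ, ∀ r : ℕ, r₀ ≤ r →
      ∃ (W : Type) (H : Set (Finset W)) (sides : Fin r → Set W),
        Partite H sides ∧ Uniform H r ∧ Intersecting H ∧
        (1 - ε) * (r : ℝ) ≤ (coverNumber H : ℝ) := by
  classical
  -- reduce to ε' ≤ 1/2
  set ε' : ℝ := min ε (1/2) with hε'def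
  have hε'pos : 0 < ε' := lt_min hε (by norm_num)
  have hε'le : ε' ≤ 1/2 := min_le_right _ _
  have hε'ε : ε' ≤ ε := min_le_left _ _
  -- choose G
  set G : ℕ := ⌈(6:ℝ)/ε'⌉₊ with hGdef
  have hG6 : (6:ℝ)/ε' ≤ G := Nat.le_ceil _
  have hG12 : 12 ≤ G := by
    have h1 : (12:ℝ) ≤ 6/ε' := by
      rw [le_div_iff₀ hε'pos]
      linarith
    have : (12:ℝ) ≤ (G:ℝ) := le_trans h1 hG6
    exact_mod_cast this
  have hGpos : 0 < G := by omega
  -- choose close primes p < p'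
  obtain ⟨p, p', hp, hp', hpGG, hplt, hdG, hdGp⟩ := prime_pair G (G * G) (by omega)
  set d : ℕ := p' - p with hd
  set u : ℕ := p + 1 with hu
  set v : ℕ := p' + 1 with hv
  have hvu : v = u + d := by omega
  have hdpos : 0 < d := by omega
  have hupos : 0 < u := by omega
  have hvpos : 0 < v := by omega
  have huGG : G * G < u := by omega
  -- choose J
  set J : ℕ := 3 * u / d + 1 with hJ
  have hJd : 3 * u < J * d := by
    have h1 := Nat.div_add_mod (3 * u) d
    have h2 := Nat.mod_lt (3 * u) hdpos
    have heq : J * d = d * (3 * u / d) + d := by rw [hJ]; ring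
    omega
  have hJpos : 0 < J := hJ ▸ Nat.succ_pos _
  -- real preliminaries
  have hGR : (0:ℝ) < (G:ℝ) := by exact_mod_cast hGpos
  have huR : (0:ℝ) < (u:ℝ) := by exact_mod_cast hupos
  have hvR : (0:ℝ) < (v:ℝ) := by exact_mod_cast hvpos
  have hdR : (0:ℝ) < (d:ℝ) := by exact_mod_cast hdpos
  set g : ℝ := 1/(G:ℝ) with hgdef
  have hg0 : 0 < g := by positivity
  have hg112 : g ≤ 1/12 := by
    rw [hgdef, div_le_div_iff₀ hGR (by norm_num)]
    have : (12:ℝ) ≤ (G:ℝ) := by exact_mod_cast hG12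
    linarith
  -- J/u ≤ 4 g
  have hJu : (J:ℝ) * (1/(u:ℝ)) ≤ 4 * g := by
    have h1 : (J:ℝ) ≤ 3*(u:ℝ)/(d:ℝ) + 1 := by
      rw [hJ]
      push_cast
      have := Nat.cast_div_le (α := ℝ) (m := 3*u) (n := d)
      push_cast at this
      linarith
    have hdGR : (G:ℝ) ≤ (d:ℝ) := by exact_mod_cast hdG
    have huGGR : (G:ℝ) * (G:ℝ) ≤ (u:ℝ) := by
      have : (G*G:ℕ) ≤ (u:ℕ) := by omega
      exact_mod_cast this
    have h2 : (J:ℝ) * (1/(u:ℝ)) ≤ (3*(u:ℝ)/(d:ℝ) + 1) * (1/(u:ℝ)) := by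
      apply mul_le_mul_of_nonneg_right h1 (by positivity)
    have h3 : (3*(u:ℝ)/(d:ℝ) + 1) * (1/(u:ℝ)) = 3/(d:ℝ) + 1/(u:ℝ) := by
      field_simp
    have hgd : (1:ℝ) ≤ g * (d:ℝ) := by
      rw [hgdef, div_mul_eq_mul_div, one_mul, le_div_iff₀ hGR, one_mul]
      exact_mod_cast hdG
    have h4 : 3/(d:ℝ) ≤ 3 * g := by
      rw [div_le_iff₀ hdR]
      nlinarith [hgd]
    have hGu : (G:ℝ) ≤ (u:ℝ) := by
      have h : G ≤ u := le_trans (Nat.le_mul_of_pos_left G hGpos) (le_of_lt huGG)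
      exact_mod_cast h
    have h5 : 1/(u:ℝ) ≤ g := by
      rw [hgdef]
      exact one_div_le_one_div_of_le hGR hGu
    calc (J:ℝ) * (1/(u:ℝ)) ≤ 3/(d:ℝ) + 1/(u:ℝ) := by rw [← h3]; exact h2
      _ ≤ 3 * g + g := by linarith
      _ = 4 * g := by ring
  -- span: 4 u^J < v^J
  have hspanR : 4 * (u:ℝ)^J < (v:ℝ)^J := by
    have hx : (0:ℝ) ≤ (d:ℝ)/(u:ℝ) := by positivity
    have hb : 1 + (J:ℝ) * ((d:ℝ)/(u:ℝ)) ≤ (1 + (d:ℝ)/(u:ℝ))^J :=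
      one_add_mul_le_pow (by linarith) J
    have hJd3 : 3 < (J:ℝ) * ((d:ℝ)/(u:ℝ)) := by
      have hc : (3:ℝ) * (u:ℝ) < (J:ℝ) * (d:ℝ) := by exact_mod_cast hJd
      have he : (J:ℝ) * ((d:ℝ)/(u:ℝ)) = ((J:ℝ) * (d:ℝ))/(u:ℝ) := by ring
      rw [he, lt_div_iff₀ huR]
      linarith
    have hveq : (v:ℝ) = (u:ℝ) * (1 + (d:ℝ)/(u:ℝ)) := by
      field_simp
      push_cast [hvu]
      ring
    calc 4 * (u:ℝ)^J < (1 + (J:ℝ) * ((d:ℝ)/(u:ℝ))) * (u:ℝ)^J := by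
          have hupow : (0:ℝ) < (u:ℝ)^J := by positivity
          nlinarith
      _ ≤ (1 + (d:ℝ)/(u:ℝ))^J * (u:ℝ)^J := by
          apply mul_le_mul_of_nonneg_right hb (by positivity)
      _ = (v:ℝ)^J := by rw [hveq, mul_pow]; ring
  have hspanN : 4 * u^J < v^J := by exact_mod_cast hspanR
  -- r₀
  refine ⟨2 * u^J * (G + 2), ?_⟩
  intro r hr
  set n₀ : ℕ := u ^ J with hn₀
  have hn₀pos : 0 < n₀ := pow_pos hupos J
  have hrpos : 0 < r := lt_of_lt_of_le (by positivity) hr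
  set q₀ : ℕ := r / (2 * n₀) with hq₀
  have hq₀G : G + 2 ≤ q₀ := by
    rw [hq₀, Nat.le_div_iff_mul_le (by omega)]
    calc (G + 2) * (2 * n₀) = 2 * n₀ * (G + 2) := by ring
      _ ≤ r := by rw [hn₀]; exact hr
  -- Bertrand
  obtain ⟨P, hP, hPm, hPle⟩ := Nat.exists_prime_lt_and_le_two_mul (q₀ - 1) (by omega)
  have hPG : G ≤ P := by omega
  have hPpos : 0 < P := hP.pos
  -- upper bound : (P+1) * n₀ ≤ r
  have hdiv := Nat.div_add_mod r (2 * n₀)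
  rw [← hq₀] at hdiv
  have hmod := Nat.mod_lt r (show 0 < 2*n₀ by omega)
  have hUpper0 : (P + 2) * n₀ ≤ r := by
    have h1 : P + 2 ≤ 2 * q₀ := by omega
    calc (P + 2) * n₀ ≤ (2 * q₀) * n₀ := Nat.mul_le_mul_right n₀ h1
      _ = 2 * n₀ * q₀ := by ring
      _ ≤ r := by omega
  -- lower bound : r < (P+1) * v^J
  have hLower : r < (P + 1) * v^J := by
    have h1 : q₀ + 1 ≤ P + 1 := by omega
    have h2 : r < 2 * n₀ * q₀ + 2 * n₀ := by omega
    have h3 : (q₀ + 1) * (4 * n₀) ≤ (P + 1) * v^J := by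
      apply Nat.mul_le_mul h1
      omega
    have h4 : (q₀ + 1) * (4 * n₀) = 2 * (2 * n₀ * q₀) + 4 * n₀ := by ring
    omega
  -- find the right level j
  set pred : ℕ → Prop := fun j => (P + 1) * (u ^ (J - j) * v ^ j) ≤ r with hpred
  have hpred0 : pred 0 := by
    show (P + 1) * (u ^ (J - 0) * v ^ 0) ≤ r
    simp only [Nat.sub_zero, pow_zero, mul_one]
    calc (P+1) * u^J ≤ (P+2) * n₀ := by
          rw [hn₀]
          exact Nat.mul_le_mul_right _ (by omega)
      _ ≤ r := hUpper0
  set j : ℕ := Nat.findGreatest pred J with hjdef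
  have hjle : j ≤ J := Nat.findGreatest_le J
  have hspec : (P + 1) * (u ^ (J - j) * v ^ j) ≤ r :=
    Nat.findGreatest_spec (Nat.zero_le J) hpred0
  have hjlt : j < J := by
    rcases Nat.lt_or_ge j J with h | h
    · exact h
    · exfalso
      have hjJ : j = J := by omega
      rw [hjJ] at hspec
      simp only [Nat.sub_self, pow_zero, one_mul] at hspec
      omega
  have hnext : r < (P + 1) * (u ^ (J - (j+1)) * v ^ (j+1)) := by
    by_contra hcon
    push_neg at hcon
    exact (Nat.findGreatest_is_greatest (Nat.lt_succ_self j) (by omega)) hcon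
  have hstep : u ^ (J - (j+1)) * v ^ (j+1) * u = (u ^ (J - j) * v ^ j) * v := by
    have e : J - j = (J - (j+1)) + 1 := by omega
    rw [e, pow_succ, pow_succ]
    ring
  -- the key counting inequality in ℕ
  have hkey : r * u < (P + 1) * (u ^ (J - j) * v ^ j) * v := by
    calc r * u < (P + 1) * (u ^ (J - (j+1)) * v ^ (j+1)) * u := by
          exact Nat.mul_lt_mul_of_lt_of_le hnext (le_refl u) hupos
      _ = (P + 1) * (u ^ (J - (j+1)) * v ^ (j+1) * u) := by ring
      _ = (P + 1) * ((u ^ (J - j) * v ^ j) * v) := by rw [hstep]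
      _ = (P + 1) * (u ^ (J - j) * v ^ j) * v := by ring
  -- build the hypergraph
  set T : ℕ := P * (p ^ (J - j) * p' ^ j) with hT
  have hXpos : 0 < u ^ (J - j) * v ^ j :=
    Nat.mul_pos (pow_pos hupos _) (pow_pos hvpos _)
  have hgood : GoodFam r T := by
    apply goodFam_pad (Nat.mul_pos (by omega) hXpos) hspec
    rw [hT]
    apply goodFam_mul (by omega) hXpos (goodFam_prime P hP)
    apply goodFam_mul (pow_pos hupos _) (pow_pos hvpos _)
    · rw [hu]; exact goodFam_pow (by omega) (goodFam_prime p hp) (J - j)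
    · rw [hv]; exact goodFam_pow (by omega) (goodFam_prime p' hp') j
  obtain ⟨W, H, sides, h1, h2, h3, h4⟩ := goodFam_coverNumber hrpos hgood
  refine ⟨W, H, sides, h1, h2, h3, ?_⟩
  -- final real estimate
  have hTR : (T:ℝ) ≤ (coverNumber H : ℝ) := by exact_mod_cast h4
  have hfinal : (1 - ε') * (r:ℝ) ≤ (T:ℝ) := by
    set X : ℝ := (u:ℝ)^(J-j) * (v:ℝ)^j with hX
    set Y : ℝ := (p:ℝ)^(J-j) * (p':ℝ)^j with hY
    have hXpos' : (0:ℝ) < X := by positivity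
    have hYnn : (0:ℝ) ≤ Y := by positivity
    have hPR : (0:ℝ) < (P:ℝ) := by exact_mod_cast hPpos
    have hrR : (0:ℝ) ≤ (r:ℝ) := by positivity
    have f4 : (r:ℝ) * u < ((P:ℝ)+1) * X * v := by
      have := hkey
      have hcast : ((r * u : ℕ):ℝ) < (((P + 1) * (u ^ (J - j) * v ^ j) * v : ℕ):ℝ) := by
        exact_mod_cast this
      push_cast at hcast
      rw [hX]
      push_cast
      linarith
    have f1 : (1 - g) * (v:ℝ) ≤ (u:ℝ) := by
      have hdv : (d:ℝ) * (G:ℝ) ≤ (v:ℝ) := by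
        have : d * G ≤ v := by omega
        exact_mod_cast this
      have hvu' : (v:ℝ) = (u:ℝ) + (d:ℝ) := by exact_mod_cast hvu
      have hdvG : (d:ℝ) ≤ (v:ℝ)/(G:ℝ) := by
        rw [le_div_iff₀ hGR]
        linarith
      have expand : (1 - g) * (v:ℝ) = (v:ℝ) - (v:ℝ) * g := by ring
      have hvg : (v:ℝ) * g = (v:ℝ)/(G:ℝ) := by rw [hgdef]; ring
      rw [expand, hvg]
      linarith
    have f2 : (1 - g) * ((P:ℝ)+1) ≤ (P:ℝ) := by
      have hGP : (G:ℝ) ≤ (P:ℝ) + 1 := by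
        have : G ≤ P + 1 := by omega
        exact_mod_cast this
      have h1 : (1:ℝ) ≤ g * ((P:ℝ)+1) := by
        rw [hgdef, div_mul_eq_mul_div, one_mul, le_div_iff₀ hGR, one_mul]
        linarith
      have expand : (1 - g) * ((P:ℝ)+1) = ((P:ℝ)+1) - g * ((P:ℝ)+1) := by ring
      rw [expand]
      linarith
    have f3 : (1 - 4*g) * X ≤ Y := by
      have hpu : (p:ℝ) = (u:ℝ) * (1 - 1/(u:ℝ)) := by
        field_simp
        push_cast [hu]
        ring
      have hpv : (p':ℝ) = (v:ℝ) * (1 - 1/(v:ℝ)) := by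
        field_simp
        push_cast [hv]
        ring
      have h1u : (0:ℝ) ≤ 1 - 1/(u:ℝ) := by
        rw [sub_nonneg, div_le_one huR]
        exact_mod_cast hupos
      have huv' : 1 - 1/(u:ℝ) ≤ 1 - 1/(v:ℝ) := by
        have : (u:ℝ) ≤ (v:ℝ) := by exact_mod_cast (by omega : u ≤ v)
        have := one_div_le_one_div_of_le huR this
        linarith
      have hYX : Y = X * ((1 - 1/(u:ℝ))^(J-j) * (1 - 1/(v:ℝ))^j) := by
        rw [hY, hX, hpu, hpv, mul_pow, mul_pow]
        ring
      have hbern : 1 - 4*g ≤ (1 - 1/(u:ℝ))^(J-j) * (1 - 1/(v:ℝ))^j := by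
        have hb1 : 1 - (J:ℝ) * (1/(u:ℝ)) ≤ (1 - 1/(u:ℝ))^J := by
          have := one_add_mul_le_pow (a := -(1/(u:ℝ))) (by
            have : 1/(u:ℝ) ≤ 1 := by
              rw [div_le_one huR]; exact_mod_cast hupos
            linarith) J
          calc 1 - (J:ℝ) * (1/(u:ℝ)) = 1 + (J:ℝ) * (-(1/(u:ℝ))) := by ring
            _ ≤ (1 + -(1/(u:ℝ)))^J := this
            _ = (1 - 1/(u:ℝ))^J := by ring_nf
        have hsplit : (1 - 1/(u:ℝ))^J = (1 - 1/(u:ℝ))^(J-j) * (1 - 1/(u:ℝ))^j := by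
          rw [← pow_add]
          congr 1
          omega
        have hmono : (1 - 1/(u:ℝ))^j ≤ (1 - 1/(v:ℝ))^j := pow_le_pow_left₀ h1u huv' j
        calc 1 - 4*g ≤ 1 - (J:ℝ) * (1/(u:ℝ)) := by linarith [hJu]
          _ ≤ (1 - 1/(u:ℝ))^J := hb1
          _ = (1 - 1/(u:ℝ))^(J-j) * (1 - 1/(u:ℝ))^j := hsplit
          _ ≤ (1 - 1/(u:ℝ))^(J-j) * (1 - 1/(v:ℝ))^j := by
              apply mul_le_mul_of_nonneg_left hmono (pow_nonneg h1u _)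
      rw [hYX]
      calc (1 - 4*g) * X = X * (1 - 4*g) := by ring
        _ ≤ X * ((1 - 1/(u:ℝ))^(J-j) * (1 - 1/(v:ℝ))^j) :=
            mul_le_mul_of_nonneg_left hbern (le_of_lt hXpos')
    -- combine
    have hgm : (0:ℝ) ≤ (1-g) := by linarith
    have hg4m : (0:ℝ) ≤ (1-4*g) := by linarith
    have step1 : (1-g)*(1-4*g)*((r:ℝ)*u) ≤ (1-g)*(1-4*g)*(((P:ℝ)+1)*X*v) := by
      apply mul_le_mul_of_nonneg_left (le_of_lt f4) (by positivity)
    have step3 : ((1-g)*((P:ℝ)+1)) * ((1-4*g)*X) ≤ (P:ℝ) * Y :=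
      mul_le_mul f2 f3 (mul_nonneg hg4m (le_of_lt hXpos')) (le_of_lt hPR)
    have step3' : (1-g)*(1-4*g)*(((P:ℝ)+1)*X*v) ≤ (P:ℝ) * Y * v := by
      have : (1-g)*(1-4*g)*(((P:ℝ)+1)*X*v) = (((1-g)*((P:ℝ)+1)) * ((1-4*g)*X)) * v := by ring
      rw [this]
      apply mul_le_mul_of_nonneg_right step3 (le_of_lt hvR)
    have step4 : (1-ε') * (r:ℝ) * v ≤ (1-g)*(1-4*g)*((r:ℝ)*u) := by
      have ha : (r:ℝ) * ((1-g)*v) ≤ (r:ℝ) * u := mul_le_mul_of_nonneg_left f1 hrR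
      have h6g : 6 * g ≤ ε' := by
        rw [hgdef, mul_one_div, div_le_iff₀ hGR]
        have h7 : 6 / ε' * ε' ≤ (G:ℝ) * ε' := mul_le_mul_of_nonneg_right hG6 (le_of_lt hε'pos)
        rw [div_mul_cancel₀ _ (ne_of_gt hε'pos)] at h7
        linarith [mul_comm (G:ℝ) ε']
      have hc : (1-ε') ≤ (1-g)*(1-g)*(1-4*g) := by nlinarith [hg0, hg112, h6g, sq_nonneg g]
      calc (1-ε') * (r:ℝ) * v ≤ ((1-g)*(1-g)*(1-4*g)) * (r:ℝ) * v := by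
            apply mul_le_mul_of_nonneg_right _ (le_of_lt hvR)
            apply mul_le_mul_of_nonneg_right hc hrR
        _ = (1-g)*(1-4*g)*((r:ℝ)*((1-g)*v)) := by ring
        _ ≤ (1-g)*(1-4*g)*((r:ℝ)*u) := by
            apply mul_le_mul_of_nonneg_left ha (by positivity)
    have hTv : (1-ε') * (r:ℝ) * v ≤ (T:ℝ) * v := by
      have hTY : (T:ℝ) = (P:ℝ) * Y := by
        rw [hT, hY]
        push_cast
        ring
      calc (1-ε') * (r:ℝ) * v ≤ (1-g)*(1-4*g)*((r:ℝ)*u) := step4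
        _ ≤ (1-g)*(1-4*g)*(((P:ℝ)+1)*X*v) := step1
        _ ≤ (P:ℝ) * Y * v := step3'
        _ = (T:ℝ) * v := by rw [hTY]
    exact le_of_mul_le_mul_right hTv hvR
  have : (1 - ε) * (r:ℝ) ≤ (1 - ε') * (r:ℝ) := by
    apply mul_le_mul_of_nonneg_right _ (by positivity)
    linarith
  linarith


theorem statement_17 (ε : ℝ) (hε : 0 < ε) :
    ∃ r₀ : ℕ, ∀ r : ℕ, r₀ ≤ r →
      ∃ (W : Type) (H : Set (Finset W)) (sides : Fin r → Set W),
        Partite H sides ∧ Uniform H r ∧ Intersecting H ∧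
        (1 - ε) * (r : ℝ) ≤ (coverNumber H : ℝ) := by
  exact statement_17_aux ε hε

end
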